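/- Let n ≥ 2 and let W be a unitary matrix on ℂ² ⊗ ℂ^{2^{n−1}} (qubit A₁ together with the remaining n−1 qubits). Define the channel E₁ on 2×2 matrices by E₁(ρ) := Tr_B[ W (ρ ⊗ I_{2^{n−1}}/2^{n−1}) W† ], where Tr_B is the partial trace over the second factor. If E₁(ρ) = ρ for every 2×2 matrix ρ, then there exists a unitary W' on ℂ^{2^{n−1}} such that W = I₂ ⊗ W'. -/
import Mathlib


open Matrix Kronecker

noncomputable section

/-- If a double sum of `z * star z` vanishes over `ℂ`, every term vanishes. -/
lemma sum_mul_star_self_eq_zero {m : ℕ} (f : Fin m → Fin m → ℂ)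
    (h : ∑ k : Fin m, ∑ l : Fin m, f k l * star (f k l) = 0) :
    ∀ k l, f k l = 0 := by
  have h' : ∑ k : Fin m, ∑ l : Fin m, (Complex.normSq (f k l) : ℝ) = 0 := by
    have : ((∑ k : Fin m, ∑ l : Fin m, (Complex.normSq (f k l) : ℝ) : ℝ) : ℂ) = 0 := by
      push_cast
      rw [← h]
      exact Finset.sum_congr rfl fun k _ => Finset.sum_congr rfl fun l _ => by
        simp [Complex.mul_conj]
    exact_mod_cast this
  intro k l
  have h1 : ∀ k ∈ Finset.univ, (0:ℝ) ≤ ∑ l : Fin m, (Complex.normSq (f k l) : ℝ) :=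
    fun k _ => Finset.sum_nonneg fun l _ => Complex.normSq_nonneg _
  have h2 := (Finset.sum_eq_zero_iff_of_nonneg h1).mp h' k (Finset.mem_univ k)
  have h3 := (Finset.sum_eq_zero_iff_of_nonneg
    (fun l _ => Complex.normSq_nonneg (f k l))).mp h2 l (Finset.mem_univ l)
  exact Complex.normSq_eq_zero.mp h3

/-- The channel `E₁(ρ) = Tr_B[ W (ρ ⊗ I_m/m) W† ]` on one-qubit matrices, for a unitary
`W` on `ℂ² ⊗ ℂ^m`, written out entrywise. -/
def E1 (m : ℕ) (W : Matrix (Fin 2 × Fin m) (Fin 2 × Fin m) ℂ)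
    (ρ : Matrix (Fin 2) (Fin 2) ℂ) : Matrix (Fin 2) (Fin 2) ℂ :=
  Matrix.of fun a b =>
    (1 / m : ℂ) * ∑ k : Fin m, ∑ s : Fin 2, ∑ t : Fin 2, ∑ l : Fin m,
      W (a, k) (s, l) * ρ s t * star (W (b, k) (t, l))

/-- The main statement for a general nonzero dimension `m` of the second factor. -/
lemma stmt8_aux (m : ℕ) (hm : (m : ℂ) ≠ 0)
    (W : Matrix (Fin 2 × Fin m) (Fin 2 × Fin m) ℂ)
    (hW : W ∈ Matrix.unitaryGroup (Fin 2 × Fin m) ℂ)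
    (h : ∀ ρ : Matrix (Fin 2) (Fin 2) ℂ, E1 m W ρ = ρ) :
    ∃ W' : Matrix (Fin m) (Fin m) ℂ,
      W' ∈ Matrix.unitaryGroup (Fin m) ℂ ∧
      W = (1 : Matrix (Fin 2) (Fin 2) ℂ) ⊗ₖ W' := by
  -- Key identity from the identity-channel hypothesis at standard basis matrices.
  have key : ∀ a b s t : Fin 2,
      (∑ k : Fin m, ∑ l : Fin m, W (a,k) (s,l) * star (W (b,k) (t,l)))
        = if a = s ∧ b = t then (m : ℂ) else 0 := by
    intro a b s t
    have h1 := congrFun (congrFun (h (Matrix.single s t 1)) a) b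
    simp only [E1, Matrix.of_apply, Matrix.single, ite_and, mul_ite, ite_mul,
      mul_one, mul_zero, zero_mul, one_mul, Finset.sum_ite_eq, Finset.mem_univ, if_true,
      Finset.sum_ite_irrel, Finset.sum_const_zero] at h1
    have h2 : (∑ k : Fin m, ∑ l : Fin m, W (a,k) (s,l) * star (W (b,k) (t,l)))
        = (m : ℂ) * (if s = a then if t = b then 1 else 0 else 0) := by
      rw [← h1, one_div, ← mul_assoc, mul_inv_cancel₀ hm, one_mul]
    rw [h2, ite_and]
    simp [eq_comm, mul_ite]
  -- Off-diagonal blocks vanish.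
  have hz : ∀ a s : Fin 2, a ≠ s → ∀ k l, W (a,k) (s,l) = 0 := by
    intro a s has k l
    refine sum_mul_star_self_eq_zero (fun k l => W (a,k) (s,l)) ?_ k l
    have := key a a s s
    rwa [if_neg (by simp [has])] at this
  -- The two diagonal blocks agree.
  have hAB : ∀ k l, W ((0:Fin 2),k) ((0:Fin 2),l) = W ((1:Fin 2),k) ((1:Fin 2),l) := by
    have hs : ∑ k : Fin m, ∑ l : Fin m,
        (W (0,k) (0,l) - W (1,k) (1,l)) * star (W (0,k) (0,l) - W (1,k) (1,l)) = 0 := by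
      have e00 := key 0 0 0 0
      have e11 := key 1 1 1 1
      have e01 := key 0 1 0 1
      have e10 := key 1 0 1 0
      simp only [if_pos (⟨rfl, rfl⟩ : (0:Fin 2) = 0 ∧ (0:Fin 2) = 0)] at e00
      simp only [if_pos (⟨rfl, rfl⟩ : (1:Fin 2) = 1 ∧ (1:Fin 2) = 1)] at e11
      simp only [if_pos (⟨rfl, rfl⟩ : (0:Fin 2) = 0 ∧ (1:Fin 2) = 1)] at e01
      simp only [if_pos (⟨rfl, rfl⟩ : (1:Fin 2) = 1 ∧ (0:Fin 2) = 0)] at e10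
      have expand : ∀ k : Fin m, ∀ l : Fin m,
          (W (0,k) (0,l) - W (1,k) (1,l)) * star (W (0,k) (0,l) - W (1,k) (1,l))
          = W (0,k) (0,l) * star (W (0,k) (0,l)) - W (0,k) (0,l) * star (W (1,k) (1,l))
            - W (1,k) (1,l) * star (W (0,k) (0,l)) + W (1,k) (1,l) * star (W (1,k) (1,l)) := by
        intro k l; simp only [star_sub]; ring
      calc ∑ k : Fin m, ∑ l : Fin m,
            (W (0,k) (0,l) - W (1,k) (1,l)) * star (W (0,k) (0,l) - W (1,k) (1,l))
          = (∑ k : Fin m, ∑ l : Fin m, W (0,k) (0,l) * star (W (0,k) (0,l)))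
            - (∑ k : Fin m, ∑ l : Fin m, W (0,k) (0,l) * star (W (1,k) (1,l)))
            - (∑ k : Fin m, ∑ l : Fin m, W (1,k) (1,l) * star (W (0,k) (0,l)))
            + (∑ k : Fin m, ∑ l : Fin m, W (1,k) (1,l) * star (W (1,k) (1,l))) := by
            simp only [expand, Finset.sum_add_distrib, Finset.sum_sub_distrib]
        _ = 0 := by rw [e00, e11, e01, e10]; ring
    intro k l
    have := sum_mul_star_self_eq_zero
      (fun k l => W (0,k) (0,l) - W (1,k) (1,l)) hs k l
    linear_combination this
  -- The candidate block.
  refine ⟨Matrix.of (fun k l => W (0,k) (0,l)), ?_, ?_⟩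
  · rw [Matrix.mem_unitaryGroup_iff]
    have hWU : W * star W = 1 := Matrix.mem_unitaryGroup_iff.mp hW
    ext k l
    have h1 := congrFun (congrFun hWU ((0:Fin 2),k)) ((0:Fin 2),l)
    rw [Matrix.mul_apply] at h1
    rw [Fintype.sum_prod_type, Fin.sum_univ_two] at h1
    simp only [Matrix.star_apply, hz 1 0 (by decide), hz 0 1 (by decide),
      star_zero, mul_zero, zero_mul, Finset.sum_const_zero, add_zero] at h1
    rw [Matrix.mul_apply]
    simp only [Matrix.star_apply, Matrix.of_apply]
    rw [h1]
    by_cases hkl : k = l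
    · subst hkl; simp [Matrix.one_apply]
    · simp [Matrix.one_apply, hkl, Prod.ext_iff]
  · ext ⟨a, k⟩ ⟨s, l⟩
    rw [Matrix.kroneckerMap_apply, Matrix.one_apply]
    by_cases has : a = s
    · subst has
      rw [if_pos rfl, one_mul, Matrix.of_apply]
      rcases (by omega : a = 0 ∨ a = 1) with rfl | rfl
      · rfl
      · exact (hAB k l).symm
    · rw [if_neg has, zero_mul]
      exact hz a s has k l

/-- Let `n ≥ 2` and let `W` be unitary on `ℂ² ⊗ ℂ^{2^{n−1}}`.  If the
channel `E₁` associated to `W` is the identity channel, then `W = I₂ ⊗ W'` for some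
unitary `W'` on `ℂ^{2^{n−1}}`. -/
theorem stmt8 (n : ℕ) (hn : 2 ≤ n)
    (W : Matrix (Fin 2 × Fin (2 ^ (n - 1))) (Fin 2 × Fin (2 ^ (n - 1))) ℂ)
    (hW : W ∈ Matrix.unitaryGroup (Fin 2 × Fin (2 ^ (n - 1))) ℂ)
    (h : ∀ ρ : Matrix (Fin 2) (Fin 2) ℂ, E1 (2 ^ (n - 1)) W ρ = ρ) :
    ∃ W' : Matrix (Fin (2 ^ (n - 1))) (Fin (2 ^ (n - 1))) ℂ,
      W' ∈ Matrix.unitaryGroup (Fin (2 ^ (n - 1))) ℂ ∧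
      W = (1 : Matrix (Fin 2) (Fin 2) ℂ) ⊗ₖ W' := by
  refine stmt8_aux (2 ^ (n - 1)) ?_ W hW h
  exact_mod_cast (Nat.pos_of_ne_zero (by positivity)).ne'

end
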